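/- The function ψ(t) = √(1−t²) + (π − arccos t)/t is strictly decreasing on (0,1). -/

import Mathlib

open Real

theorem psi_strictAnti :
    StrictAntiOn (fun t : ℝ => Real.sqrt (1 - t ^ 2) + (π - arccos t) / t)
      (Set.Ioo (0 : ℝ) 1) := by
  have key : ∀ x ∈ Set.Ioo (0:ℝ) 1,
      HasDerivAt (fun t : ℝ => Real.sqrt (1 - t ^ 2) + (π - arccos t) / t)
        (-(x / Real.sqrt (1 - x ^ 2)) +
          ((0 - -(1 / Real.sqrt (1 - x ^ 2))) * x - (π - arccos x) * 1) / x ^ 2) x := by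
    rintro x ⟨hx0, hx1⟩
    have h1 : (0:ℝ) < 1 - x ^ 2 := by nlinarith
    have hsqrt : HasDerivAt (fun t : ℝ => Real.sqrt (1 - t ^ 2))
        (-(x / Real.sqrt (1 - x ^ 2))) x := by
      have := (Real.hasDerivAt_sqrt h1.ne').comp x
        ((hasDerivAt_const x (1:ℝ)).sub (hasDerivAt_pow 2 x))
      refine this.congr_deriv ?_
      field_simp
      ring
    have harc : HasDerivAt (fun t : ℝ => (π - arccos t) / t)
        (((0 - -(1 / Real.sqrt (1 - x ^ 2))) * x - (π - arccos x) * 1) / x ^ 2) x := by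
      exact ((hasDerivAt_const x π).sub
        (Real.hasDerivAt_arccos (by linarith) (by linarith))).div (hasDerivAt_id x) hx0.ne'
    exact hsqrt.add harc
  apply strictAntiOn_of_deriv_neg (convex_Ioo 0 1)
  · intro x hx
    exact (key x hx).continuousAt.continuousWithinAt
  · intro x hx
    rw [interior_Ioo] at hx
    rw [(key x hx).deriv]
    obtain ⟨hx0, hx1⟩ := hx
    have h1 : (0:ℝ) < 1 - x ^ 2 := by nlinarith
    have hs0 : 0 < Real.sqrt (1 - x ^ 2) := Real.sqrt_pos.mpr h1
    have hs2 : Real.sqrt (1 - x ^ 2) ^ 2 = 1 - x ^ 2 := Real.sq_sqrt h1.le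
    have hs1 : Real.sqrt (1 - x ^ 2) < 1 := by nlinarith
    have hacc : arccos x < π / 2 := Real.arccos_lt_pi_div_two.mpr hx0
    have hpi : (3:ℝ) < π := Real.pi_gt_three
    have heq : -(x / Real.sqrt (1 - x ^ 2)) +
        ((0 - -(1 / Real.sqrt (1 - x ^ 2))) * x - (π - arccos x) * 1) / x ^ 2
        = (x * Real.sqrt (1 - x ^ 2) - (π - arccos x)) / x ^ 2 := by
      field_simp
      linear_combination (-x) * hs2
    rw [heq]
    apply div_neg_of_neg_of_pos _ (by positivity)
    nlinarith
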